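/- arXiv:1703.00658 — 2 statements merged into one kernel-verified Lean document; each statement's English description precedes it below -/
import Mathlib

section
/- Let H be a Hilbert space and f : (τ,T) → H a measurable function with f(t) ≠ 0 for a.e. t. Let ū* ∈ L^∞(τ,T;H) with ‖ū*(t)‖ ≤ 1 a.e. Suppose that for all ū with ‖ū(t)‖ ≤ 1 a.e., ∫_τ^T ⟨ū(σ), f(σ)⟩ dσ ≤ ∫_τ^T ⟨ū*(σ), f(σ)⟩ dσ. Then ‖ū*(t)‖ = 1 for a.e. t ∈ (τ,T). -/
open MeasureTheory Set
open scoped RealInnerProductSpace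

/-- Abstract maximum principle: if `ū*` with `‖ū* t‖ ≤ 1` a.e. maximizes
`∫ ⟨ū, f⟩` over all `ū` with `‖ū t‖ ≤ 1` a.e., and `f ≠ 0` a.e., then `‖ū* t‖ = 1` a.e. -/
theorem bang_bang_of_maximizer
    {H : Type*} [NormedAddCommGroup H] [InnerProductSpace ℝ H]
    (τ T : ℝ) (hτ : 0 ≤ τ) (hτT : τ < T)
    (f : ℝ → H) (hf_int : IntegrableOn f (Ioo τ T))
    (hf_ne : ∀ᵐ t ∂(volume.restrict (Ioo τ T)), f t ≠ 0)
    (ustar : ℝ → H)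
    (hustar_meas : AEStronglyMeasurable ustar (volume.restrict (Ioo τ T)))
    (hustar_bd : ∀ᵐ t ∂(volume.restrict (Ioo τ T)), ‖ustar t‖ ≤ 1)
    (hmax : ∀ u : ℝ → H, AEStronglyMeasurable u (volume.restrict (Ioo τ T)) →
      (∀ᵐ t ∂(volume.restrict (Ioo τ T)), ‖u t‖ ≤ 1) →
      ∫ σ in Ioo τ T, ⟪u σ, f σ⟫ ≤ ∫ σ in Ioo τ T, ⟪ustar σ, f σ⟫) :
    ∀ᵐ t ∂(volume.restrict (Ioo τ T)), ‖ustar t‖ = 1 := by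
  set μ := volume.restrict (Ioo τ T)
  set u : ℝ → H := fun σ => (‖f σ‖⁻¹ : ℝ) • f σ with hu_def
  have hu_meas : AEStronglyMeasurable u μ :=
    (hf_int.aestronglyMeasurable.norm.aemeasurable.inv.aestronglyMeasurable).smul hf_int.aestronglyMeasurable
  have hu_bd : ∀ t, ‖u t‖ ≤ 1 := by
    intro t
    by_cases h : f t = 0
    · simp [hu_def, h]
    · have : ‖u t‖ = ‖f t‖⁻¹ * ‖f t‖ := by
        rw [hu_def]
        simp [norm_smul, abs_of_nonneg (inv_nonneg.2 (norm_nonneg _))]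
      rw [this, inv_mul_cancel₀ (norm_ne_zero_iff.2 h)]
  have key := hmax u hu_meas (Filter.Eventually.of_forall hu_bd)
  -- ⟪u σ, f σ⟫ = ‖f σ‖ a.e.
  have huf : ∀ᵐ σ ∂μ, ⟪u σ, f σ⟫ = ‖f σ‖ := by
    filter_upwards [hf_ne] with σ hσ
    rw [hu_def]
    simp only [real_inner_smul_left, real_inner_self_eq_norm_sq]
    field_simp [norm_ne_zero_iff.2 hσ]
  -- inner product with ustar is integrable and bounded by ‖f‖
  have hinner_meas : AEStronglyMeasurable (fun σ => ⟪ustar σ, f σ⟫) μ :=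
    hustar_meas.inner hf_int.aestronglyMeasurable
  have hinner_bd : ∀ᵐ σ ∂μ, ‖⟪ustar σ, f σ⟫‖ ≤ ‖f σ‖ := by
    filter_upwards [hustar_bd] with σ hσ
    calc ‖⟪ustar σ, f σ⟫‖ ≤ ‖ustar σ‖ * ‖f σ‖ := norm_inner_le_norm _ _
      _ ≤ 1 * ‖f σ‖ := by
          exact mul_le_mul_of_nonneg_right hσ (norm_nonneg _)
      _ = ‖f σ‖ := one_mul _
  have hinner_int : Integrable (fun σ => ⟪ustar σ, f σ⟫) μ :=
    Integrable.mono' hf_int.norm hinner_meas hinner_bd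
  have hnorm_int : Integrable (fun σ => ‖f σ‖) μ := hf_int.norm
  have hle : ∫ σ, ‖f σ‖ ∂μ ≤ ∫ σ, ⟪ustar σ, f σ⟫ ∂μ := by
    calc ∫ σ, ‖f σ‖ ∂μ = ∫ σ, ⟪u σ, f σ⟫ ∂μ :=
          integral_congr_ae (huf.mono fun σ h => h.symm)
      _ ≤ ∫ σ, ⟪ustar σ, f σ⟫ ∂μ := key
  -- g := ‖f‖ - ⟪ustar, f⟫ is nonneg a.e., integrable, integral ≤ 0 ⇒ g = 0 a.e.
  set g : ℝ → ℝ := fun σ => ‖f σ‖ - ⟪ustar σ, f σ⟫ with hg_def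
  have hg_int : Integrable g μ := hnorm_int.sub hinner_int
  have hg_nonneg : 0 ≤ᵐ[μ] g := by
    filter_upwards [hinner_bd] with σ hσ
    have := (abs_le.1 (by simpa using hσ)).2
    simp [hg_def]; linarith
  have hg_int_le : ∫ σ, g σ ∂μ ≤ 0 := by
    have := integral_sub hnorm_int hinner_int
    simp only [hg_def]
    rw [this]; linarith
  have hg_zero : g =ᵐ[μ] 0 := by
    have h0 : ∫ σ, g σ ∂μ = 0 :=
      le_antisymm hg_int_le (integral_nonneg_of_ae hg_nonneg)
    exact ((integral_eq_zero_iff_of_nonneg_ae hg_nonneg hg_int).1 h0)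
  filter_upwards [hg_zero, hf_ne, hustar_bd] with σ hσ hfσ hbd
  have hfn : (0 : ℝ) < ‖f σ‖ := norm_pos_iff.2 hfσ
  have heq : ⟪ustar σ, f σ⟫ = ‖f σ‖ := by
    have : g σ = 0 := hσ
    simp only [hg_def] at this; linarith
  have hcs : ⟪ustar σ, f σ⟫ ≤ ‖ustar σ‖ * ‖f σ‖ := real_inner_le_norm _ _
  have : 1 ≤ ‖ustar σ‖ := by
    rw [heq] at hcs
    nlinarith
  linarith
end

section
/- Let H be a Hilbert space, g ∈ L¹(0,T;H), and let t₀ ∈ (0,T) be a Lebesgue point of g. Suppose ū* ∈ L^∞(0,T;H) and t₀ is also a Lebesgue point of σ ↦ ⟨ū*(σ), g(σ)⟩. If for every ζ ∈ H with ‖ζ‖ ≤ 1 and every small λ > 0 one has ∫_{t₀-λ}^{t₀+λ} ⟨ζ, g(σ)⟩ dσ ≤ ∫_{t₀-λ}^{t₀+λ} ⟨ū*(σ), g(σ)⟩ dσ, then ‖g(t₀)‖ ≤ ⟨ū*(t₀), g(t₀)⟩, and hence ‖ū*(t₀)‖ ≥ 1 whenever g(t₀) ≠ 0. -/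
open MeasureTheory Filter Set
open scoped RealInnerProductSpace Topology

/-- At a Lebesgue point `t₀` of `g` and of `σ ↦ ⟨ū* σ, g σ⟫`, if the averaged inequality
`∫ ⟨ζ, g⟩ ≤ ∫ ⟨ū*, g⟩` holds on small symmetric intervals for all unit-ball `ζ`, then
`‖g t₀‖ ≤ ⟨ū* t₀, g t₀⟩`, and `‖ū* t₀‖ ≥ 1` whenever `g t₀ ≠ 0`. -/
theorem pointwise_maximum_principle_at_lebesgue_point
    {H : Type*} [NormedAddCommGroup H] [InnerProductSpace ℝ H]
    (T t₀ : ℝ) (ht₀ : t₀ ∈ Ioo 0 T)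
    (g : ℝ → H) (hg_int : IntegrableOn g (Ioo 0 T))
    (ustar : ℝ → H) (hustar_mem : MemLp ustar ⊤ (volume.restrict (Ioo 0 T)))
    (hLeb_g : Tendsto
      (fun lam : ℝ => (1 / (2 * lam)) * ∫ σ in Ioo (t₀ - lam) (t₀ + lam), ‖g σ - g t₀‖)
      (𝓝[>] 0) (𝓝 0))
    (hLeb_ug : Tendsto
      (fun lam : ℝ => (1 / (2 * lam)) * ∫ σ in Ioo (t₀ - lam) (t₀ + lam), ⟪ustar σ, g σ⟫)
      (𝓝[>] 0) (𝓝 ⟪ustar t₀, g t₀⟫))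
    (hineq : ∃ lam₀ > 0, ∀ lam ∈ Ioo (0 : ℝ) lam₀, ∀ ζ : H, ‖ζ‖ ≤ 1 →
      ∫ σ in Ioo (t₀ - lam) (t₀ + lam), ⟪ζ, g σ⟫ ≤
        ∫ σ in Ioo (t₀ - lam) (t₀ + lam), ⟪ustar σ, g σ⟫) :
    ‖g t₀‖ ≤ ⟪ustar t₀, g t₀⟫ ∧ (g t₀ ≠ 0 → 1 ≤ ‖ustar t₀‖) := by
  obtain ⟨lam₀, hlam₀, hineq⟩ := hineq
  obtain ⟨ht₀0, ht₀T⟩ := ht₀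
  set ε := min (min t₀ (T - t₀)) lam₀ with hεdef
  have hεpos : 0 < ε := lt_min (lt_min ht₀0 (by linarith)) hlam₀
  have hsub : ∀ lam ∈ Ioo (0:ℝ) ε, Ioo (t₀ - lam) (t₀ + lam) ⊆ Ioo 0 T := by
    intro lam hlam σ hσ
    have h1 : lam < t₀ := lt_of_lt_of_le hlam.2 (le_trans (min_le_left _ _) (min_le_left _ _))
    have h2 : lam < T - t₀ := lt_of_lt_of_le hlam.2 (le_trans (min_le_left _ _) (min_le_right _ _))
    exact ⟨by linarith [hσ.1], by linarith [hσ.2]⟩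
  have hev : Ioo (0:ℝ) ε ∈ 𝓝[>] (0:ℝ) := Ioo_mem_nhdsGT_of_mem ⟨le_refl 0, hεpos⟩
  have key : ∀ ζ : H, ‖ζ‖ ≤ 1 → ⟪ζ, g t₀⟫ ≤ ⟪ustar t₀, g t₀⟫ := by
    intro ζ hζ
    have htζ : Tendsto
        (fun lam : ℝ => (1 / (2 * lam)) * ∫ σ in Ioo (t₀ - lam) (t₀ + lam), ⟪ζ, g σ⟫)
        (𝓝[>] 0) (𝓝 ⟪ζ, g t₀⟫) := by
      rw [tendsto_iff_norm_sub_tendsto_zero]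
      apply squeeze_zero_norm' _ hLeb_g
      filter_upwards [hev] with lam hlam
      have hlampos : (0:ℝ) < lam := hlam.1
      have hgint : IntegrableOn g (Ioo (t₀ - lam) (t₀ + lam)) :=
        hg_int.mono_set (hsub lam hlam)
      have hdiff : IntegrableOn (fun σ => g σ - g t₀) (Ioo (t₀ - lam) (t₀ + lam)) :=
        hgint.sub (integrableOn_const (by simp [Real.volume_Ioo]))
      have hvol : (volume (Ioo (t₀ - lam) (t₀ + lam))).toReal = 2 * lam := by
        rw [Real.volume_Ioo, ENNReal.toReal_ofReal (by linarith)]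
        ring
      have hconst : ∫ _ in Ioo (t₀ - lam) (t₀ + lam), ⟪ζ, g t₀⟫ = (2 * lam) * ⟪ζ, g t₀⟫ := by
        rw [setIntegral_const, measureReal_def, hvol, smul_eq_mul]
      have hrw : (1 / (2 * lam)) * (∫ σ in Ioo (t₀ - lam) (t₀ + lam), ⟪ζ, g σ⟫) - ⟪ζ, g t₀⟫
          = (1 / (2 * lam)) * ∫ σ in Ioo (t₀ - lam) (t₀ + lam), ⟪ζ, g σ - g t₀⟫ := by
        have hiζ : IntegrableOn (fun σ => ⟪ζ, g σ⟫) (Ioo (t₀ - lam) (t₀ + lam)) :=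
          (innerSL ℝ ζ).integrable_comp hgint
        rw [show (fun σ => ⟪ζ, g σ - g t₀⟫) = fun σ => ⟪ζ, g σ⟫ - ⟪ζ, g t₀⟫ by
              funext σ; rw [inner_sub_right],
          integral_sub hiζ (integrableOn_const (by simp [Real.volume_Ioo])),
          hconst]
        field_simp
      rw [hrw]
      have hbound : ‖∫ σ in Ioo (t₀ - lam) (t₀ + lam), ⟪ζ, g σ - g t₀⟫‖
          ≤ ∫ σ in Ioo (t₀ - lam) (t₀ + lam), ‖g σ - g t₀‖ := by
        refine le_trans (norm_integral_le_integral_norm _) ?_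
        refine integral_mono_of_nonneg (Filter.Eventually.of_forall fun σ => norm_nonneg _)
          hdiff.norm (Filter.Eventually.of_forall fun σ => ?_)
        calc ‖⟪ζ, g σ - g t₀⟫‖ ≤ ‖ζ‖ * ‖g σ - g t₀‖ := by
              rw [Real.norm_eq_abs]; exact abs_real_inner_le_norm _ _
          _ ≤ 1 * ‖g σ - g t₀‖ := mul_le_mul_of_nonneg_right hζ (norm_nonneg _)
          _ = ‖g σ - g t₀‖ := one_mul _
      rw [norm_norm, norm_mul, Real.norm_eq_abs,
        abs_of_pos (show (0:ℝ) < 1 / (2 * lam) from by positivity)]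
      exact mul_le_mul_of_nonneg_left hbound (by positivity)
    refine le_of_tendsto_of_tendsto htζ hLeb_ug ?_
    filter_upwards [hev] with lam hlam
    have hlampos : (0:ℝ) < lam := hlam.1
    have h := hineq lam ⟨hlam.1, lt_of_lt_of_le hlam.2 (min_le_right _ _)⟩ ζ hζ
    exact mul_le_mul_of_nonneg_left h (by positivity)
  have main : ‖g t₀‖ ≤ ⟪ustar t₀, g t₀⟫ := by
    by_cases hg0 : g t₀ = 0
    · simpa [hg0] using key 0 (by simp)
    · have hnorm : ‖g t₀‖ ≠ 0 := norm_ne_zero_iff.2 hg0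
      have h := key (‖g t₀‖⁻¹ • g t₀) (by
        rw [norm_smul, norm_inv, norm_norm, inv_mul_cancel₀ hnorm])
      rwa [real_inner_smul_left, real_inner_self_eq_norm_mul_norm,
        inv_mul_eq_div, mul_div_assoc, div_self hnorm, mul_one] at h
  refine ⟨main, fun hg0 => ?_⟩
  have hnormpos : (0:ℝ) < ‖g t₀‖ := norm_pos_iff.2 hg0
  have h2 : ⟪ustar t₀, g t₀⟫ ≤ ‖ustar t₀‖ * ‖g t₀‖ := real_inner_le_norm _ _
  nlinarith [main]
end
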